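/- With V the space of N×N matrices over F_q supported on P = {(i,j) : i < j < N+1−i} and π the projection onto V, the map f: U_N(F_q) → V given by f(u) = π(u) is a right 1-cocycle for the action A.u = π(Au): that is, f(uv) = f(u).v + f(v) for all upper unitriangular u, v. -/

import Mathlib

open Matrix

/-- With `P = {(i,j) : i < j < N+1-i}` (0-indexed: `i < j` and `i+j+1 < N`) and
`π` the projection onto matrices supported on `P`, the map `f(u) = π(u)` on the
upper unitriangular group is a right 1-cocycle for the action `A.u = π(A u)`:
`f(uv) = f(u).v + f(v)`. -/
theorem stmt_12 {F : Type} [Field F] [Fintype F] {N : ℕ}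
    (π : Matrix (Fin N) (Fin N) F → Matrix (Fin N) (Fin N) F)
    (hπ : ∀ A i j, π A i j =
      if i < j ∧ (i : ℕ) + (j : ℕ) + 1 < N then A i j else 0) :
    ∀ u v : Matrix (Fin N) (Fin N) F,
      ((∀ i, u i i = 1) ∧ (∀ i j : Fin N, j < i → u i j = 0)) →
      ((∀ i, v i i = 1) ∧ (∀ i j : Fin N, j < i → v i j = 0)) →
      π (u * v) = π (π u * v) + π v := by
  intro u v hu hv
  obtain ⟨hu1, hu0⟩ := hu
  obtain ⟨hv1, hv0⟩ := hv
  ext i j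
  simp only [Matrix.add_apply, hπ]
  split_ifs with h
  · obtain ⟨hij, hN⟩ := h
    simp only [mul_apply, hπ]
    have key : ∀ k : Fin N, u i k * v k j =
        (if i < k ∧ (i : ℕ) + (k : ℕ) + 1 < N then u i k else 0) * v k j
          + (if k = i then v i j else 0) := by
      intro k
      by_cases hik : i < k
      · have hki : k ≠ i := ne_of_gt hik
        rw [if_neg hki, add_zero]
        by_cases hkN : (i : ℕ) + (k : ℕ) + 1 < N
        · rw [if_pos ⟨hik, hkN⟩]
        · rw [if_neg (by tauto), zero_mul]
          have hjk : j < k := by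
            have : (j : ℕ) < (k : ℕ) := by omega
            exact Fin.lt_def.mpr this
          rw [hv0 k j hjk, mul_zero]
      · rw [if_neg (by tauto), zero_mul, zero_add]
        rcases lt_or_eq_of_le (not_lt.mp hik) with hk | hk
        · rw [hu0 i k hk, zero_mul, if_neg (ne_of_lt hk)]
        · subst hk
          rw [if_pos rfl, hu1, one_mul]
    calc ∑ k, u i k * v k j
        = ∑ k, ((if i < k ∧ (i : ℕ) + (k : ℕ) + 1 < N then u i k else 0) * v k j
            + (if k = i then v i j else 0)) := Finset.sum_congr rfl fun k _ => key k
      _ = (∑ k, (if i < k ∧ (i : ℕ) + (k : ℕ) + 1 < N then u i k else 0) * v k j)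
            + v i j := by
          rw [Finset.sum_add_distrib, Finset.sum_ite_eq' Finset.univ i fun _ => v i j,
            if_pos (Finset.mem_univ i)]
  · simp
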